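/- Suppose ψ is a section of a Hermitian bundle with metric connection ∇^M over a Riemannian 3-manifold satisfying ∇^M_ξ ψ = (α + b/2) ξ·ψ, ∇^M_{e₁} ψ = β e₂·ψ - (b/2) e₁·ψ, ∇^M_{e₂} ψ = -β e₁·ψ - (b/2) e₂·ψ in a local orthonormal frame {ξ, e₁, e₂}, with |ψ| ≡ 1 nowhere zero. Then the tensor E^ψ(X,Y) := Re⟨Y·∇^M_X ψ, ψ/|ψ|²⟩ equals E^ψ = -(b/2 + α) ξ^♭⊗ξ^♭ + (b/2)(e₁^♭⊗e₁^♭ + e₂^♭⊗e₂^♭) - β(e₁^♭⊗e₂^♭ - e₂^♭⊗e₁^♭), and ψ satisfies ∇^M_X ψ = -E^ψ(X)·ψ for all X. -/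

import Mathlib

open RealInnerProductSpace

/-- For a unit section ψ with
∇_ξψ = (α+b/2)ξ·ψ, ∇_{e₁}ψ = β e₂·ψ - (b/2)e₁·ψ, ∇_{e₂}ψ = -β e₁·ψ - (b/2)e₂·ψ
in an orthonormal frame {ξ,e₁,e₂}, the energy-momentum tensor
E^ψ(X,Y) = Re⟨Y·∇_Xψ, ψ/|ψ|²⟩ equals
-(b/2+α) ξ^♭⊗ξ^♭ + (b/2)(e₁^♭⊗e₁^♭+e₂^♭⊗e₂^♭) - β(e₁^♭⊗e₂^♭-e₂^♭⊗e₁^♭),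
and ψ satisfies ∇_Xψ = -E^ψ(X)·ψ for all X. -/
theorem energy_momentum_three_dim {T V : Type*}
    [NormedAddCommGroup T] [InnerProductSpace ℝ T]
    [NormedAddCommGroup V] [InnerProductSpace ℂ V]
    (c : T →ₗ[ℝ] V →ₗ[ℂ] V)    -- Clifford multiplication
    (ξ e1 e2 : T)
    (hframe : Orthonormal ℝ ![ξ, e1, e2])
    (hspan : Submodule.span ℝ {ξ, e1, e2} = ⊤)
    (hskew : ∀ (X : T) (φ1 φ2 : V), (inner ℂ (c X φ1) φ2 : ℂ) = - inner ℂ φ1 (c X φ2))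
    (hcliff : ∀ (X Y : T) (φ : V),
      c X (c Y φ) + c Y (c X φ) = ((-2 * ⟪X, Y⟫ : ℝ) : ℂ) • φ)
    (α β b : ℝ) (ψ : V) (hψ : ‖ψ‖ = 1)
    (Dψ : T →ₗ[ℝ] V)            -- X ↦ ∇^M_X ψ
    (hDξ : Dψ ξ = ((α + b/2 : ℝ) : ℂ) • c ξ ψ)
    (hD1 : Dψ e1 = (β : ℂ) • c e2 ψ - ((b/2 : ℝ) : ℂ) • c e1 ψ)
    (hD2 : Dψ e2 = -(β : ℂ) • c e1 ψ - ((b/2 : ℝ) : ℂ) • c e2 ψ)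
    (E : T → T → ℝ)
    (hE : ∀ X Y, E X Y = (inner ℂ (c Y (Dψ X)) ψ : ℂ).re) :
    (∀ X Y, E X Y =
      -(b/2 + α) * ⟪ξ, X⟫ * ⟪ξ, Y⟫
      + (b/2) * (⟪e1, X⟫ * ⟪e1, Y⟫ + ⟪e2, X⟫ * ⟪e2, Y⟫)
      - β * (⟪e1, X⟫ * ⟪e2, Y⟫ - ⟪e2, X⟫ * ⟪e1, Y⟫)) ∧
    (∀ X, Dψ X = - c (E X ξ • ξ + E X e1 • e1 + E X e2 • e2) ψ) := by
  -- orthonormality facts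
  have hON := orthonormal_iff_ite.mp hframe
  have h00 : ⟪ξ, ξ⟫ = 1 := by simpa using hON 0 0
  have h11 : ⟪e1, e1⟫ = 1 := by simpa using hON 1 1
  have h22 : ⟪e2, e2⟫ = 1 := by simpa using hON 2 2
  have h01 : ⟪ξ, e1⟫ = 0 := by simpa using hON 0 1
  have h02 : ⟪ξ, e2⟫ = 0 := by simpa using hON 0 2
  have h10 : ⟪e1, ξ⟫ = 0 := by simpa using hON 1 0
  have h12 : ⟪e1, e2⟫ = 0 := by simpa using hON 1 2
  have h20 : ⟪e2, ξ⟫ = 0 := by simpa using hON 2 0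
  have h21 : ⟪e2, e1⟫ = 0 := by simpa using hON 2 1
  have hψ2 : (inner ℂ ψ ψ : ℂ) = 1 := by
    rw [inner_self_eq_norm_sq_to_K, hψ]; norm_num
  -- decomposition of any vector in the frame
  have hdec : ∀ X : T, X = ⟪ξ, X⟫ • ξ + ⟪e1, X⟫ • e1 + ⟪e2, X⟫ • e2 := by
    intro X
    set v := X - (⟪ξ, X⟫ • ξ + ⟪e1, X⟫ • e1 + ⟪e2, X⟫ • e2) with hv
    have hvξ : ⟪ξ, v⟫ = 0 := by
      simp [hv, inner_sub_right, inner_add_right, real_inner_smul_right,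
        h00, h01, h02, (show ‖ξ‖ = 1 by simpa using hframe.1 0)]
    have hve1 : ⟪e1, v⟫ = 0 := by
      simp [hv, inner_sub_right, inner_add_right, real_inner_smul_right,
        h10, h11, h12, (show ‖e1‖ = 1 by simpa using hframe.1 1)]
    have hve2 : ⟪e2, v⟫ = 0 := by
      simp [hv, inner_sub_right, inner_add_right, real_inner_smul_right,
        h20, h21, h22, (show ‖e2‖ = 1 by simpa using hframe.1 2)]
    have hall : ∀ u : T, ⟪u, v⟫ = 0 := by
      intro u
      have hu : u ∈ Submodule.span ℝ ({ξ, e1, e2} : Set T) := by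
        rw [hspan]; trivial
      induction hu using Submodule.span_induction with
      | mem x hx =>
        rcases hx with h | h | h <;> subst h <;> assumption
      | zero => simp
      | add x y _ _ hx hy => rw [inner_add_left, hx, hy]; ring
      | smul r x _ hx => rw [real_inner_smul_left, hx]; ring
    have : ⟪v, v⟫ = 0 := hall v
    have hv0 : v = 0 := by
      exact inner_self_eq_zero.mp this
    exact sub_eq_zero.mp hv0
  -- the basic Clifford real-part identity
  have ha : ∀ X Y : T, (inner ℂ (c Y (c X ψ)) ψ : ℂ).re = -⟪X, Y⟫ := by
    intro X Y
    have h2 : (inner ℂ (c X (c Y ψ)) ψ : ℂ) + inner ℂ (c Y (c X ψ)) ψ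
        = ((-2 * ⟪X, Y⟫ : ℝ) : ℂ) := by
      have := congrArg (fun v => (inner ℂ v ψ : ℂ)) (hcliff X Y ψ)
      simpa [inner_add_left, inner_smul_left, hψ2, hψ, Complex.conj_ofReal, map_ofNat]
        using this
    have h3 : (inner ℂ (c X (c Y ψ)) ψ : ℂ).re = (inner ℂ (c Y (c X ψ)) ψ : ℂ).re := by
      have hc : (inner ℂ (c X (c Y ψ)) ψ : ℂ) = (starRingEnd ℂ) (inner ℂ (c Y (c X ψ)) ψ) := by
        rw [hskew X (c Y ψ) ψ, hskew Y (c X ψ) ψ, map_neg, inner_conj_symm]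
      rw [hc, Complex.conj_re]
    have h4 := congrArg Complex.re h2
    rw [Complex.add_re, h3] at h4
    simp only [Complex.ofReal_re] at h4
    linarith
  -- E on the frame vectors
  have hre : ∀ (r : ℝ) (z : ℂ), ((r : ℂ) * z).re = r * z.re := by
    intro r z; simp [Complex.mul_re]
  have hEξ : ∀ Y, E ξ Y = -(α + b/2) * ⟪ξ, Y⟫ := by
    intro Y
    rw [hE, hDξ, map_smul, inner_smul_left, Complex.conj_ofReal, hre, ha]
    ring
  have hEe1 : ∀ Y, E e1 Y = (b/2) * ⟪e1, Y⟫ - β * ⟪e2, Y⟫ := by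
    intro Y
    rw [hE, hD1, map_sub, map_smul, map_smul, inner_sub_left, inner_smul_left,
      inner_smul_left, Complex.conj_ofReal, Complex.conj_ofReal, Complex.sub_re,
      hre, hre, ha, ha]
    ring
  have hEe2 : ∀ Y, E e2 Y = (b/2) * ⟪e2, Y⟫ + β * ⟪e1, Y⟫ := by
    intro Y
    rw [hE, hD2, map_sub, map_smul, map_smul, inner_sub_left, inner_smul_left,
      inner_smul_left, Complex.conj_ofReal, Complex.sub_re]
    rw [show ((starRingEnd ℂ) (-(β:ℂ))) = ((-β : ℝ) : ℂ) by simp, hre, hre, ha, ha]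
    ring
  -- linearity of E in the first variable
  have hEadd : ∀ X X' Y, E (X + X') Y = E X Y + E X' Y := by
    intro X X' Y
    rw [hE, hE, hE, map_add, map_add, inner_add_left, Complex.add_re]
  have hEsmul : ∀ (r : ℝ) X Y, E (r • X) Y = r * E X Y := by
    intro r X Y
    rw [hE, hE, map_smul, LinearMap.map_smul_of_tower, ← Complex.coe_smul,
      inner_smul_left, Complex.conj_ofReal, hre]
  -- Part 1
  have part1 : ∀ X Y, E X Y =
      -(b/2 + α) * ⟪ξ, X⟫ * ⟪ξ, Y⟫
      + (b/2) * (⟪e1, X⟫ * ⟪e1, Y⟫ + ⟪e2, X⟫ * ⟪e2, Y⟫)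
      - β * (⟪e1, X⟫ * ⟪e2, Y⟫ - ⟪e2, X⟫ * ⟪e1, Y⟫) := by
    intro X Y
    have hX := hdec X
    calc E X Y = E (⟪ξ, X⟫ • ξ + ⟪e1, X⟫ • e1 + ⟪e2, X⟫ • e2) Y := by rw [← hX]
      _ = ⟪ξ, X⟫ * E ξ Y + ⟪e1, X⟫ * E e1 Y + ⟪e2, X⟫ * E e2 Y := by
          rw [hEadd, hEadd, hEsmul, hEsmul, hEsmul]
      _ = _ := by rw [hEξ, hEe1, hEe2]; ring
  refine ⟨part1, ?_⟩
  -- Part 2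
  intro X
  have hXξ : E X ξ = -(b/2 + α) * ⟪ξ, X⟫ := by
    rw [part1 X ξ, h00, h10, h20]; ring
  have hXe1 : E X e1 = (b/2) * ⟪e1, X⟫ + β * ⟪e2, X⟫ := by
    rw [part1 X e1, h01, h11, h21]; ring
  have hXe2 : E X e2 = (b/2) * ⟪e2, X⟫ - β * ⟪e1, X⟫ := by
    rw [part1 X e2, h02, h12, h22]; ring
  have hL : Dψ X = ⟪ξ, X⟫ • Dψ ξ + ⟪e1, X⟫ • Dψ e1 + ⟪e2, X⟫ • Dψ e2 := by
    conv_lhs => rw [hdec X]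
    rw [map_add, map_add, map_smul, map_smul, map_smul]
  rw [hL, hDξ, hD1, hD2, hXξ, hXe1, hXe2]
  rw [map_add, map_add, map_smul, map_smul, map_smul]
  simp only [LinearMap.add_apply, LinearMap.smul_apply, LinearMap.neg_apply,
    Complex.real_smul]
  push_cast
  match_scalars <;> (push_cast [Complex.coe_algebraMap]; ring)
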